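/- In every preference profile over a set of m ≥ 2 candidates with n ≥ 1 voters, there exists a pair of distinct candidates {x,y} whose deletion-clone value satisfies α_{x,y} ≤ (m−2)/m. -/

import Mathlib

open Finset

/-- Counting lemma on `Fin (2+k)`: the number of ordered pairs of distinct positions
at distance `> 1` is at most `(k+1)*k`. -/
lemma finBadPairs_card_le (k : ℕ) :
    (((univ : Finset (Fin (2+k))).offDiag.filter
        fun q => 1 < ((q.1 : ℤ) - (q.2 : ℤ)).natAbs).card) ≤ (k+1) * k := by
  classical
  set D := (univ : Finset (Fin (2+k))).offDiag with hD
  have hDcard : D.card = (2+k) * (1+k) := by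
    rw [hD, Finset.offDiag_card, Finset.card_univ, Fintype.card_fin]
    have : (2+k) * (2+k) = (2+k) * (1+k) + (2+k) := by ring
    omega
  -- the "good" (adjacent) pairs are at least 2*(k+1)
  have hgood : 2 * (k+1) ≤ (D.filter fun q => ¬ 1 < ((q.1 : ℤ) - (q.2 : ℤ)).natAbs).card := by
    have key := Finset.card_le_card_of_injOn
      (s := (univ : Finset (Fin (k+1) × Bool)))
      (t := D.filter fun q => ¬ 1 < ((q.1 : ℤ) - (q.2 : ℤ)).natAbs)
      (fun jb => if jb.2 then
          ((⟨jb.1.1, by omega⟩ : Fin (2+k)), (⟨jb.1.1 + 1, by omega⟩ : Fin (2+k)))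
        else
          ((⟨jb.1.1 + 1, by omega⟩ : Fin (2+k)), (⟨jb.1.1, by omega⟩ : Fin (2+k))))
      ?mem ?inj
    case mem =>
      rintro ⟨j, b⟩ -
      have hj : j.1 < k + 1 := j.2
      cases b <;>
        simp only [if_true, if_false, Bool.false_eq_true, Finset.mem_coe, Finset.mem_filter, hD,
          Finset.mem_offDiag, Finset.mem_univ, true_and, ne_eq, Fin.mk.injEq, not_lt] <;>
        constructor <;> omega
    case inj =>
      rintro ⟨j, b⟩ - ⟨j', b'⟩ - h
      cases b <;> cases b' <;>
        simp only [if_true, if_false, Bool.false_eq_true, Prod.mk.injEq, Fin.mk.injEq] at h <;>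
        simp only [Prod.mk.injEq, Fin.ext_iff] <;>
        first
          | omega
          | (exact absurd rfl (by omega))
          | (refine ⟨by omega, ?_⟩; omega)
          | simp_all
    calc 2 * (k+1) = (univ : Finset (Fin (k+1) × Bool)).card := by
          simp [Finset.card_univ]; ring
      _ ≤ _ := key
  have hsplit := Finset.card_filter_add_card_filter_not
    (s := D) (p := fun q => 1 < ((q.1 : ℤ) - (q.2 : ℤ)).natAbs)
  have hring : (2+k) * (1+k) = (k+1) * k + 2 * (k+1) := by ring
  omega

theorem exists_pair_deletion_clone_le
    (C : Type*) [Fintype C] [DecidableEq C] (m n : ℕ)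
    (hm : 2 ≤ m) (hC : Fintype.card C = m) (hn : 1 ≤ n)
    (P : Fin n → (C ≃ Fin m)) :
    ∃ x y : C, x ≠ y ∧
      ((univ.filter fun i : Fin n =>
          1 < ((P i x : ℤ) - (P i y : ℤ)).natAbs).card : ℝ) / n ≤ ((m : ℝ) - 2) / m := by
  classical
  obtain ⟨k, rfl⟩ : ∃ k, m = 2 + k := ⟨m - 2, by omega⟩
  set D := (univ : Finset C).offDiag with hD
  set N : C × C → ℕ := fun p =>
    (univ.filter fun i : Fin n => 1 < ((P i p.1 : ℤ) - (P i p.2 : ℤ)).natAbs).card with hN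
  -- per-voter bound
  have hvoter : ∀ i : Fin n,
      (D.filter fun p => 1 < ((P i p.1 : ℤ) - (P i p.2 : ℤ)).natAbs).card ≤ (k+1) * k := by
    intro i
    refine le_trans (Finset.card_le_card_of_injOn (fun p => (P i p.1, P i p.2)) ?_ ?_)
      (finBadPairs_card_le k)
    · rintro ⟨x, y⟩ hp
      rw [Finset.mem_coe, Finset.mem_filter] at hp ⊢
      rw [hD, Finset.mem_offDiag] at hp
      rw [Finset.mem_offDiag]
      exact ⟨⟨Finset.mem_univ _, Finset.mem_univ _,
        fun h => hp.1.2.2 ((P i).injective h)⟩, hp.2⟩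
    · rintro ⟨x, y⟩ - ⟨x', y'⟩ - h
      simp only [Prod.mk.injEq] at h
      exact Prod.ext ((P i).injective h.1) ((P i).injective h.2)
  -- swap sums
  have hsum : ∑ p ∈ D, N p ≤ n * ((k+1) * k) := by
    have hswap : ∑ p ∈ D, N p = ∑ i : Fin n,
        (D.filter fun p => 1 < ((P i p.1 : ℤ) - (P i p.2 : ℤ)).natAbs).card := by
      simp only [hN, Finset.card_filter]
      rw [Finset.sum_comm]
    rw [hswap]
    calc ∑ i : Fin n, (D.filter fun p => 1 < ((P i p.1 : ℤ) - (P i p.2 : ℤ)).natAbs).card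
        ≤ ∑ _i : Fin n, (k+1)*k := Finset.sum_le_sum fun i _ => hvoter i
      _ = n * ((k+1)*k) := by simp [Finset.sum_const, Finset.card_univ, mul_comm]
  have hDcard : D.card = (2+k) * (1+k) := by
    rw [hD, Finset.offDiag_card, Finset.card_univ, hC]
    have : (2+k) * (2+k) = (2+k) * (1+k) + (2+k) := by ring
    omega
  have hDne : D.Nonempty := by
    have h1 : 1 < Fintype.card C := by omega
    obtain ⟨x, y, hxy⟩ := Fintype.exists_pair_of_one_lt_card h1
    exact ⟨(x, y), by simp [hD, Finset.mem_offDiag, hxy]⟩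
  -- pigeonhole
  have hpig : ∃ p ∈ D, N p * (2+k) ≤ k * n := by
    apply Finset.exists_le_of_sum_le hDne
    calc ∑ p ∈ D, N p * (2+k) = (∑ p ∈ D, N p) * (2+k) := by rw [Finset.sum_mul]
      _ ≤ n * ((k+1)*k) * (2+k) := Nat.mul_le_mul_right _ hsum
      _ = D.card * (k * n) := by rw [hDcard]; ring
      _ = ∑ _p ∈ D, k * n := by simp [Finset.sum_const, mul_comm]
  obtain ⟨⟨x, y⟩, hpD, hple⟩ := hpig
  have hxy : x ≠ y := by
    rw [hD, Finset.mem_offDiag] at hpD; exact hpD.2.2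
  refine ⟨x, y, hxy, ?_⟩
  show (N (x, y) : ℝ) / n ≤ (((2+k : ℕ) : ℝ) - 2) / ((2+k : ℕ) : ℝ)
  have hn' : (0 : ℝ) < n := by exact_mod_cast hn
  have hm' : (0 : ℝ) < ((2 + k : ℕ) : ℝ) := by positivity
  rw [div_le_div_iff₀ hn' hm']
  have h2 : (N (x, y) : ℝ) * ((2:ℝ) + k) ≤ (k : ℝ) * n := by exact_mod_cast hple
  push_cast
  linarith
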